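/- Let n, m ≥ 1, p ∈ [1, ∞) and λ ∈ (0, 1]. There exists a constant C depending only on n, p and λ such that for every affine map A: ℝⁿ → ℝᵐ, every x* ∈ ℝⁿ, every h > 0, and every Lebesgue-measurable set S ⊆ Q_h(x*) with |S| ≥ λ hⁿ, one has |S| · (sup_{x ∈ Q_h(x*)} |A(x)|)^p ≤ C ∫_S |A(x)|^p dx. -/

import Mathlib

open MeasureTheory Set


private lemma abs_lt_iff_mem_Ioo {u c r : ℝ} : |u - c| < r ↔ u ∈ Set.Ioo (c - r) (c + r) := by
  rw [Set.mem_Ioo, abs_lt]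
  constructor <;> rintro ⟨h1, h2⟩ <;> constructor <;> linarith

private lemma vol_box {N : ℕ} (c : Fin N → ℝ) (h : ℝ) :
    volume (Set.univ.pi fun i => Set.Ioo (c i - h / 2) (c i + h / 2))
      = ENNReal.ofReal h ^ N := by
  rw [volume_pi_pi]
  have : ∀ i : Fin N, volume (Set.Ioo (c i - h / 2) (c i + h / 2)) = ENNReal.ofReal h := by
    intro i
    rw [Real.volume_Ioo]
    congr 1
    ring
  simp [this]

private lemma cube_measurable {n : ℕ} (x₀ : EuclideanSpace ℝ (Fin n)) (r : ℝ) :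
    MeasurableSet {x : EuclideanSpace ℝ (Fin n) | ∀ i, |x i - x₀ i| < r} := by
  have he : {x : EuclideanSpace ℝ (Fin n) | ∀ i, |x i - x₀ i| < r} =
      ⋂ i, (fun x : EuclideanSpace ℝ (Fin n) => |x i - x₀ i|) ⁻¹' Set.Iio r := by
    ext x; simp [Set.mem_iInter]
  rw [he]
  refine MeasurableSet.iInter fun i => ?_
  have hm : Measurable fun x : EuclideanSpace ℝ (Fin n) => x i :=
    (measurable_pi_apply i).comp (MeasurableEquiv.toLp 2 (Fin n → ℝ)).symm.measurable
  exact ((hm.sub measurable_const).abs) measurableSet_Iio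

private lemma vol_cube {n : ℕ} (x₀ : EuclideanSpace ℝ (Fin n)) {h : ℝ} (hh : 0 ≤ h) :
    volume {x : EuclideanSpace ℝ (Fin n) | ∀ i, |x i - x₀ i| < h / 2}
      = ENNReal.ofReal (h ^ n) := by
  have hset : {x : EuclideanSpace ℝ (Fin n) | ∀ i, |x i - x₀ i| < h / 2}
      = (MeasurableEquiv.toLp 2 (Fin n → ℝ)).symm ⁻¹'
        (Set.univ.pi fun i => Set.Ioo (x₀ i - h / 2) (x₀ i + h / 2)) := by
    ext x
    simp only [Set.mem_setOf_eq, Set.mem_preimage, Set.mem_pi, Set.mem_univ, forall_true_left]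
    constructor
    · intro hx i
      exact abs_lt_iff_mem_Ioo.1 (hx i)
    · intro hx i
      exact abs_lt_iff_mem_Ioo.2 (hx i)
  rw [hset,
    (EuclideanSpace.volume_preserving_symm_measurableEquiv_toLp (Fin n)).measure_preimage
      ((MeasurableSet.univ_pi fun i => measurableSet_Ioo).nullMeasurableSet),
    vol_box, ← ENNReal.ofReal_pow hh]

private lemma affine_rep {n : ℕ} (g : EuclideanSpace ℝ (Fin n) →ᵃ[ℝ] ℝ)
    (x₀ x : EuclideanSpace ℝ (Fin n)) :
    g x = g x₀ + ∑ i, g.linear (EuclideanSpace.single i (1 : ℝ)) * (x i - x₀ i) := by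
  have h2 : g x = g.linear (x - x₀) + g x₀ := by
    have := g.map_vadd x₀ (x - x₀)
    simpa [vadd_eq_add, sub_add_cancel] using this
  have h3 : (x - x₀ : EuclideanSpace ℝ (Fin n))
      = ∑ i, (x i - x₀ i) • (EuclideanSpace.single i (1 : ℝ)) := by
    have hb := (EuclideanSpace.basisFun (Fin n) ℝ).sum_repr (x - x₀)
    simp only [EuclideanSpace.basisFun_repr, EuclideanSpace.basisFun_apply] at hb
    rw [← hb]
    refine Finset.sum_congr rfl fun i _ => ?_
    congr 1
  rw [h2, h3, map_sum]
  simp only [_root_.map_smul, smul_eq_mul]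
  rw [add_comm]
  congr 1
  exact Finset.sum_congr rfl fun i _ => mul_comm _ _


private lemma vol_slab {k : ℕ} (x₀ : EuclideanSpace ℝ (Fin (k + 1))) {h : ℝ}
    (a : Fin (k + 1) → ℝ) (b s : ℝ) (i₀ : Fin (k + 1)) (ha : a i₀ ≠ 0) :
    volume {x : EuclideanSpace ℝ (Fin (k + 1)) | (∀ i, |x i - x₀ i| < h / 2) ∧
        |b + ∑ i, a i * (x i - x₀ i)| ≤ s}
      ≤ ENNReal.ofReal (2 * s / |a i₀|) * ENNReal.ofReal h ^ k := by
  classical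
  set σ : Fin k → Fin (k + 1) := i₀.succAbove with hσ
  set B₂ : Set (ℝ × (Fin k → ℝ)) :=
    {q | (∀ j, |q.2 j - x₀ (σ j)| < h / 2) ∧
      |b + a i₀ * (q.1 - x₀ i₀) + ∑ j, a (σ j) * (q.2 j - x₀ (σ j))| ≤ s} with hB₂def
  have hcont : ∀ j, Continuous fun q : ℝ × (Fin k → ℝ) => q.2 j :=
    fun j => (continuous_apply j).comp continuous_snd
  have hB₂ : MeasurableSet B₂ := by
    have : B₂ = (⋂ j, {q : ℝ × (Fin k → ℝ) | |q.2 j - x₀ (σ j)| < h / 2}) ∩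
        {q : ℝ × (Fin k → ℝ) |
          |b + a i₀ * (q.1 - x₀ i₀) + ∑ j, a (σ j) * (q.2 j - x₀ (σ j))| ≤ s} := by
      ext q; simp [hB₂def, Set.mem_iInter]
    rw [this]
    refine MeasurableSet.inter (MeasurableSet.iInter fun j => ?_) ?_
    · exact measurableSet_lt (((hcont j).sub continuous_const).abs.measurable) measurable_const
    · refine measurableSet_le ?_ measurable_const
      refine Continuous.measurable (Continuous.abs ?_)
      refine Continuous.add (Continuous.add continuous_const
        (continuous_const.mul (continuous_fst.sub continuous_const))) ?_
      exact continuous_finset_sum _ fun j _ =>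
        continuous_const.mul ((hcont j).sub continuous_const)
  have hsub : {x : EuclideanSpace ℝ (Fin (k + 1)) | (∀ i, |x i - x₀ i| < h / 2) ∧
        |b + ∑ i, a i * (x i - x₀ i)| ≤ s} ⊆
      (MeasurableEquiv.toLp 2 (Fin (k + 1) → ℝ)).symm ⁻¹'
        ((MeasurableEquiv.piFinSuccAbove (fun _ => ℝ) i₀) ⁻¹' B₂) := by
    rintro x ⟨hx1, hx2⟩
    have hsum : b + ∑ i, a i * (x i - x₀ i)
        = b + a i₀ * (x i₀ - x₀ i₀) + ∑ j, a (σ j) * (x (σ j) - x₀ (σ j)) := by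
      rw [Fin.sum_univ_succAbove (fun i => a i * (x i - x₀ i)) i₀]
      ring
    simp only [Set.mem_preimage, MeasurableEquiv.piFinSuccAbove_apply, hB₂def,
      Fin.insertNthEquiv_symm_apply, Fin.removeNth, MeasurableEquiv.coe_toLp_symm, Set.mem_setOf_eq]
    exact ⟨fun j => hx1 (σ j), by rw [← hsum]; exact hx2⟩
  calc volume {x : EuclideanSpace ℝ (Fin (k + 1)) | (∀ i, |x i - x₀ i| < h / 2) ∧
        |b + ∑ i, a i * (x i - x₀ i)| ≤ s}
      ≤ volume ((MeasurableEquiv.toLp 2 (Fin (k + 1) → ℝ)).symm ⁻¹'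
          ((MeasurableEquiv.piFinSuccAbove (fun _ => ℝ) i₀) ⁻¹' B₂)) := measure_mono hsub
    _ = volume ((MeasurableEquiv.piFinSuccAbove (fun _ => ℝ) i₀) ⁻¹' B₂) :=
        (EuclideanSpace.volume_preserving_symm_measurableEquiv_toLp (Fin (k + 1))).measure_preimage
          (((MeasurableEquiv.piFinSuccAbove (fun _ => ℝ) i₀).measurable hB₂).nullMeasurableSet)
    _ = volume B₂ :=
        (volume_preserving_piFinSuccAbove (fun _ => ℝ) i₀).measure_preimage
          hB₂.nullMeasurableSet
    _ = ∫⁻ y, volume ((fun t => (t, y)) ⁻¹' B₂) := by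
        rw [Measure.volume_eq_prod, Measure.prod_apply_symm hB₂]
    _ ≤ ∫⁻ y, (Set.univ.pi fun j =>
          Set.Ioo (x₀ (σ j) - h / 2) (x₀ (σ j) + h / 2)).indicator
            (fun _ => ENNReal.ofReal (2 * s / |a i₀|)) y := by
        refine lintegral_mono fun y => ?_
        by_cases hy : y ∈ Set.univ.pi fun j =>
            Set.Ioo (x₀ (σ j) - h / 2) (x₀ (σ j) + h / 2)
        · rw [Set.indicator_of_mem hy]
          set c : ℝ := b - a i₀ * x₀ i₀ + ∑ j, a (σ j) * (y j - x₀ (σ j)) with hc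
          have hss : (fun t => (t, y)) ⁻¹' B₂ ⊆
              Set.Icc (-(c / a i₀) - s / |a i₀|) (-(c / a i₀) + s / |a i₀|) := by
            rintro t ⟨-, h2⟩
            have h2' : |a i₀ * t + c| ≤ s := by
              have : b + a i₀ * (t - x₀ i₀) + ∑ j, a (σ j) * (y j - x₀ (σ j))
                  = a i₀ * t + c := by rw [hc]; ring
              rwa [this] at h2
            have habs : |t + c / a i₀| ≤ s / |a i₀| := by
              have heq : t + c / a i₀ = (a i₀ * t + c) / a i₀ := by field_simp
              rw [heq, abs_div]
              exact (div_le_div_iff_of_pos_right (abs_pos.2 ha)).2 h2'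
            obtain ⟨hl, hr⟩ := abs_le.1 habs
            constructor <;> linarith
          calc volume ((fun t => (t, y)) ⁻¹' B₂)
              ≤ volume (Set.Icc (-(c / a i₀) - s / |a i₀|) (-(c / a i₀) + s / |a i₀|)) :=
                measure_mono hss
            _ = ENNReal.ofReal ((-(c / a i₀) + s / |a i₀|) - (-(c / a i₀) - s / |a i₀|)) :=
                Real.volume_Icc
            _ ≤ ENNReal.ofReal (2 * s / |a i₀|) := by
                apply ENNReal.ofReal_le_ofReal
                apply le_of_eq
                ring
        · rw [Set.indicator_of_notMem hy]
          have hempty : (fun t => (t, y)) ⁻¹' B₂ = ∅ := by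
            ext t
            simp only [Set.mem_preimage, hB₂def, Set.mem_setOf_eq, Set.mem_empty_iff_false,
              iff_false, not_and]
            intro h1 _
            exact hy fun j _ => abs_lt_iff_mem_Ioo.1 (h1 j)
          rw [hempty]
          simp
    _ = ENNReal.ofReal (2 * s / |a i₀|) * volume (Set.univ.pi fun j =>
          Set.Ioo (x₀ (σ j) - h / 2) (x₀ (σ j) + h / 2)) :=
        lintegral_indicator_const (MeasurableSet.univ_pi fun j => measurableSet_Ioo) _
    _ = ENNReal.ofReal (2 * s / |a i₀|) * ENNReal.ofReal h ^ k := by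
        rw [vol_box (fun j => x₀ (σ j)) h]
private lemma key_claim {k m : ℕ} {p : ℝ} (hp : 1 ≤ p) {lam : ℝ} (hlam0 : 0 < lam)
    {t : ℝ} (ht0 : 0 < t) (ht4 : t ≤ 1 / 4) (htlam : t ≤ lam / (6 * (k + 1)))
    (A : EuclideanSpace ℝ (Fin (k + 1)) →ᵃ[ℝ] EuclideanSpace ℝ (Fin m))
    (x₀ : EuclideanSpace ℝ (Fin (k + 1))) {h : ℝ} (hh : 0 < h)
    (S : Set (EuclideanSpace ℝ (Fin (k + 1)))) (hSmeas : MeasurableSet S)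
    (hSsub : S ⊆ {x | ∀ i, |x i - x₀ i| < h / 2})
    (hSvol : lam * h ^ (k + 1) ≤ (volume S).toReal)
    (hint : IntegrableOn (fun x => ‖A x‖ ^ p) S volume)
    {x₁ : EuclideanSpace ℝ (Fin (k + 1))} (hx₁ : ∀ i, |x₁ i - x₀ i| < h / 2) :
    (volume S).toReal * ‖A x₁‖ ^ p ≤ (2 / t ^ p) * ∫ x in S, ‖A x‖ ^ p := by
  classical
  have hp0 : (0 : ℝ) < p := lt_of_lt_of_le one_pos hp
  have hpne : p ≠ 0 := ne_of_gt hp0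
  have htp : (0 : ℝ) < t ^ p := Real.rpow_pos_of_pos ht0 p
  have hInn : 0 ≤ ∫ x in S, ‖A x‖ ^ p :=
    integral_nonneg fun x => Real.rpow_nonneg (norm_nonneg _) _
  by_cases hM₁ : ‖A x₁‖ = 0
  · rw [hM₁, Real.zero_rpow hpne, mul_zero]
    exact mul_nonneg (div_nonneg (by norm_num) htp.le) hInn
  have hMpos : 0 < ‖A x₁‖ := lt_of_le_of_ne (norm_nonneg _) (Ne.symm hM₁)
  have hrep : ∃ (a : Fin (k + 1) → ℝ) (b : ℝ),
      (∀ x, |b + ∑ i, a i * (x i - x₀ i)| ≤ ‖A x‖) ∧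
      b + ∑ i, a i * (x₁ i - x₀ i) = ‖A x₁‖ := by
    set u : EuclideanSpace ℝ (Fin m) := ‖A x₁‖⁻¹ • A x₁ with hu_def
    have hAx₁ : A x₁ ≠ 0 := norm_ne_zero_iff.mp hM₁
    have hu : ‖u‖ = 1 := norm_smul_inv_norm hAx₁
    set g : EuclideanSpace ℝ (Fin (k + 1)) →ᵃ[ℝ] ℝ :=
      ((innerSL ℝ u).toLinearMap.toAffineMap).comp A with hg_def
    have hg : ∀ x, g x = inner ℝ u (A x) := fun x => rfl
    have hgle : ∀ x, |g x| ≤ ‖A x‖ := fun x => by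
      rw [hg]
      calc |(inner ℝ u (A x) : ℝ)| ≤ ‖u‖ * ‖A x‖ := abs_real_inner_le_norm u (A x)
        _ = ‖A x‖ := by rw [hu, one_mul]
    have hgx₁ : g x₁ = ‖A x₁‖ := by
      rw [hg, hu_def, real_inner_smul_left, real_inner_self_eq_norm_mul_norm]
      field_simp
    refine ⟨fun i => g.linear (EuclideanSpace.single i (1 : ℝ)), g x₀, fun x => ?_, ?_⟩
    · rw [← affine_rep g x₀ x]
      exact hgle x
    · rw [← affine_rep g x₀ x₁]
      exact hgx₁
  obtain ⟨a, b, hgle', hgx₁'⟩ := hrep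
  set M₁ : ℝ := ‖A x₁‖ with hM₁def
  set A1 : ℝ := ∑ i, |a i| with hA1_def
  have hA1nn : 0 ≤ A1 := Finset.sum_nonneg fun i _ => abs_nonneg _
  obtain ⟨i₀, -, hi₀⟩ := Finset.exists_max_image Finset.univ (fun i => |a i|)
    Finset.univ_nonempty
  have hA1le : A1 ≤ (k + 1) * |a i₀| := by
    calc A1 ≤ ∑ _i : Fin (k + 1), |a i₀| :=
          Finset.sum_le_sum fun i _ => hi₀ i (Finset.mem_univ i)
      _ = (k + 1) * |a i₀| := by
          rw [Finset.sum_const, Finset.card_univ, Fintype.card_fin, nsmul_eq_mul]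
          push_cast
          ring
  have habsum : ∀ (x : EuclideanSpace ℝ (Fin (k + 1))), (∀ i, |x i - x₀ i| < h / 2) →
      |∑ i, a i * (x i - x₀ i)| ≤ h / 2 * A1 := by
    intro x hx
    calc |∑ i, a i * (x i - x₀ i)| ≤ ∑ i, |a i * (x i - x₀ i)| :=
          Finset.abs_sum_le_sum_abs _ _
      _ ≤ ∑ i, |a i| * (h / 2) := by
          refine Finset.sum_le_sum fun i _ => ?_
          rw [abs_mul]
          exact mul_le_mul_of_nonneg_left (le_of_lt (hx i)) (abs_nonneg _)
      _ = h / 2 * A1 := by rw [← Finset.sum_mul, hA1_def]; ring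
  have hM₁le : M₁ ≤ |b| + h / 2 * A1 := by
    calc M₁ = b + ∑ i, a i * (x₁ i - x₀ i) := hgx₁'.symm
      _ ≤ |b + ∑ i, a i * (x₁ i - x₀ i)| := le_abs_self _
      _ ≤ |b| + |∑ i, a i * (x₁ i - x₀ i)| := abs_add_le _ _
      _ ≤ |b| + h / 2 * A1 := by linarith [habsum x₁ hx₁]
  set Z : Set (EuclideanSpace ℝ (Fin (k + 1))) :=
    {x | (∀ i, |x i - x₀ i| < h / 2) ∧ |b + ∑ i, a i * (x i - x₀ i)| ≤ t * M₁} with hZ_def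
  have hxi : ∀ i, Measurable fun x : EuclideanSpace ℝ (Fin (k + 1)) => x i := fun i =>
    (measurable_pi_apply i).comp (MeasurableEquiv.toLp 2 (Fin (k + 1) → ℝ)).symm.measurable
  have hgm : Measurable fun x : EuclideanSpace ℝ (Fin (k + 1)) =>
      |b + ∑ i, a i * (x i - x₀ i)| :=
    (measurable_const.add (Finset.measurable_sum _ fun i _ =>
      measurable_const.mul ((hxi i).sub measurable_const))).abs
  have hZmeas : MeasurableSet Z := by
    have : Z = {x : EuclideanSpace ℝ (Fin (k + 1)) | ∀ i, |x i - x₀ i| < h / 2} ∩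
        ((fun x : EuclideanSpace ℝ (Fin (k + 1)) => |b + ∑ i, a i * (x i - x₀ i)|) ⁻¹'
          Set.Iic (t * M₁)) := by
      rfl
    rw [this]
    exact (cube_measurable x₀ (h / 2)).inter (hgm measurableSet_Iic)
  have hZvol : volume Z ≤ ENNReal.ofReal (lam / 2 * h ^ (k + 1)) := by
    by_cases hb : |b| ≤ h * A1
    · have hA1pos : 0 < A1 := by nlinarith
      have hai₀ : 0 < |a i₀| := by
        have : (0:ℝ) < (k + 1 : ℝ) := by positivity
        nlinarith
      have hane : a i₀ ≠ 0 := abs_pos.mp hai₀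
      have hslab := vol_slab (h := h) x₀ a b (t * M₁) i₀ hane
      have hnum : 2 * (t * M₁) / |a i₀| ≤ lam / 2 * h := by
        rw [div_le_iff₀ hai₀]
        have e1 : M₁ ≤ 3 / 2 * h * A1 := by linarith
        have e2 : 3 / 2 * h * A1 ≤ 3 / 2 * h * ((k + 1 : ℝ) * |a i₀|) := by
          have := mul_le_mul_of_nonneg_left hA1le (by positivity : (0:ℝ) ≤ 3 / 2 * h)
          linarith
        have e3 : t * M₁ ≤ (lam / (6 * (k + 1))) * (3 / 2 * h * ((k + 1 : ℝ) * |a i₀|)) := by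
          refine mul_le_mul htlam (by linarith) hMpos.le (by positivity)
        have e4 : (lam / (6 * (k + 1))) * (3 / 2 * h * ((k + 1 : ℝ) * |a i₀|))
            = lam / 4 * h * |a i₀| := by
          field_simp
          ring
        nlinarith [mul_pos hh hai₀, mul_nonneg (mul_nonneg hlam0.le hh.le) hai₀.le]
      calc volume Z ≤ ENNReal.ofReal (2 * (t * M₁) / |a i₀|) * ENNReal.ofReal h ^ k := hslab
        _ ≤ ENNReal.ofReal (lam / 2 * h) * ENNReal.ofReal h ^ k := by
            exact mul_le_mul_left (ENNReal.ofReal_le_ofReal hnum) _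
        _ = ENNReal.ofReal (lam / 2 * h ^ (k + 1)) := by
            rw [← ENNReal.ofReal_pow hh.le, ← ENNReal.ofReal_mul (by positivity)]
            congr 1
            ring
    · push_neg at hb
      have hbpos : 0 < |b| := lt_of_le_of_lt (by positivity) hb
      have hZempty : Z = ∅ := by
        ext x
        simp only [hZ_def, Set.mem_setOf_eq, Set.mem_empty_iff_false, iff_false, not_and]
        intro hx
        rw [not_le]
        have hr := habsum x hx
        have h5 : |b| ≤ |b + ∑ i, a i * (x i - x₀ i)| + |∑ i, a i * (x i - x₀ i)| := by
          calc |b| = |(b + ∑ i, a i * (x i - x₀ i)) + (-(∑ i, a i * (x i - x₀ i)))| := by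
                congr 1; ring
            _ ≤ |b + ∑ i, a i * (x i - x₀ i)| + |-(∑ i, a i * (x i - x₀ i))| := abs_add_le _ _
            _ = |b + ∑ i, a i * (x i - x₀ i)| + |∑ i, a i * (x i - x₀ i)| := by rw [abs_neg]
        have h6 : t * M₁ ≤ 1 / 4 * M₁ := mul_le_mul_of_nonneg_right ht4 hMpos.le
        linarith
      rw [hZempty]
      simp only [measure_empty]
      positivity
  set G : Set (EuclideanSpace ℝ (Fin (k + 1))) := S \ Z with hG_def
  have hGmeas : MeasurableSet G := hSmeas.diff hZmeas
  have hSfin : volume S ≠ ⊤ := by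
    have h1 : volume S ≤ volume {x : EuclideanSpace ℝ (Fin (k + 1)) | ∀ i, |x i - x₀ i| < h / 2} :=
      measure_mono hSsub
    rw [vol_cube x₀ hh.le] at h1
    exact (lt_of_le_of_lt h1 ENNReal.ofReal_lt_top).ne
  have hGfin : volume G ≠ ⊤ := by
    refine ne_top_of_le_ne_top hSfin (measure_mono diff_subset)
  have hGlow : (volume S).toReal / 2 ≤ (volume G).toReal := by
    have h7 : volume S ≤ volume G + ENNReal.ofReal (lam / 2 * h ^ (k + 1)) := by
      calc volume S ≤ volume (G ∪ Z) := measure_mono (Set.subset_diff_union S Z)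
        _ ≤ volume G + volume Z := measure_union_le _ _
        _ ≤ volume G + ENNReal.ofReal (lam / 2 * h ^ (k + 1)) := add_le_add_right hZvol _
    have h8 := ENNReal.toReal_mono
      (ENNReal.add_ne_top.2 ⟨hGfin, ENNReal.ofReal_ne_top⟩) h7
    rw [ENNReal.toReal_add hGfin ENNReal.ofReal_ne_top,
      ENNReal.toReal_ofReal (by positivity)] at h8
    linarith
  have hlow : ∀ x ∈ G, (t * M₁) ^ p ≤ ‖A x‖ ^ p := by
    rintro x ⟨hxS, hxZ⟩
    have hcube := hSsub hxS
    have hnot : ¬ (|b + ∑ i, a i * (x i - x₀ i)| ≤ t * M₁) := fun hcon => hxZ ⟨hcube, hcon⟩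
    push_neg at hnot
    have h9 : t * M₁ ≤ ‖A x‖ := by
      have h10 := hgle' x
      linarith
    exact Real.rpow_le_rpow (by positivity) h9 hp0.le
  have h10 : (t * M₁) ^ p * (volume G).toReal ≤ ∫ x in G, ‖A x‖ ^ p :=
    setIntegral_ge_of_const_le_real hGmeas hGfin hlow (hint.mono_set diff_subset)
  have h11 : ∫ x in G, ‖A x‖ ^ p ≤ ∫ x in S, ‖A x‖ ^ p :=
    setIntegral_mono_set hint
      (Filter.Eventually.of_forall fun x => Real.rpow_nonneg (norm_nonneg _) _)
      (HasSubset.Subset.eventuallyLE diff_subset)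
  have htm : (t * M₁) ^ p = t ^ p * M₁ ^ p := Real.mul_rpow ht0.le (norm_nonneg _)
  have h12 : t ^ p * M₁ ^ p * ((volume S).toReal / 2) ≤ ∫ x in S, ‖A x‖ ^ p := by
    calc t ^ p * M₁ ^ p * ((volume S).toReal / 2)
        = (t * M₁) ^ p * ((volume S).toReal / 2) := by rw [htm]
      _ ≤ (t * M₁) ^ p * (volume G).toReal :=
          mul_le_mul_of_nonneg_left hGlow (Real.rpow_nonneg (by positivity) _)
      _ ≤ ∫ x in G, ‖A x‖ ^ p := h10
      _ ≤ ∫ x in S, ‖A x‖ ^ p := h11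
  have h13 : (2 / t ^ p) * (t ^ p * M₁ ^ p * ((volume S).toReal / 2))
      = (volume S).toReal * M₁ ^ p := by
    field_simp
  calc (volume S).toReal * M₁ ^ p
      = (2 / t ^ p) * (t ^ p * M₁ ^ p * ((volume S).toReal / 2)) := h13.symm
    _ ≤ (2 / t ^ p) * ∫ x in S, ‖A x‖ ^ p :=
        mul_le_mul_of_nonneg_left h12 (by positivity)
theorem stmt_5 (n m : ℕ) (hn : 1 ≤ n) (hm : 1 ≤ m) (p : ℝ) (hp : 1 ≤ p)
    (lam : ℝ) (hlam : lam ∈ Set.Ioc (0 : ℝ) 1) :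
    ∃ C : ℝ, ∀ (A : EuclideanSpace ℝ (Fin n) →ᵃ[ℝ] EuclideanSpace ℝ (Fin m))
      (x₀ : EuclideanSpace ℝ (Fin n)) (h : ℝ), 0 < h →
      ∀ S : Set (EuclideanSpace ℝ (Fin n)), MeasurableSet S →
        S ⊆ {x | ∀ i, |x i - x₀ i| < h / 2} →
        lam * h ^ n ≤ (volume S).toReal →
        (volume S).toReal *
            (sSup ((fun x => ‖A x‖) '' {x : EuclideanSpace ℝ (Fin n) | ∀ i, |x i - x₀ i| < h / 2})) ^ p
          ≤ C * ∫ x in S, ‖A x‖ ^ p := by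
  obtain ⟨hlam0, hlam1⟩ := hlam
  obtain ⟨k, rfl⟩ : ∃ k, n = k + 1 := ⟨n - 1, (Nat.succ_pred_eq_of_pos hn).symm⟩
  have hp0 : (0 : ℝ) < p := lt_of_lt_of_le one_pos hp
  have hpne : p ≠ 0 := ne_of_gt hp0
  set t : ℝ := min (lam / (6 * (k + 1))) (1 / 4) with ht_def
  have ht0 : 0 < t := lt_min (by positivity) (by norm_num)
  have ht4 : t ≤ 1 / 4 := min_le_right _ _
  have htlam : t ≤ lam / (6 * (k + 1)) := min_le_left _ _
  have htp : (0 : ℝ) < t ^ p := Real.rpow_pos_of_pos ht0 p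
  refine ⟨2 / t ^ p, fun A x₀ h hh S hSmeas hSsub hSvol => ?_⟩
  set Q : Set (EuclideanSpace ℝ (Fin (k + 1))) :=
    {x | ∀ i, |x i - x₀ i| < h / 2} with hQ_def
  set r : ℝ := Real.sqrt (k + 1) * (h / 2) with hr_def
  have hQball : Q ⊆ Metric.closedBall x₀ r := by
    intro x hx
    rw [Metric.mem_closedBall, dist_eq_norm]
    rw [EuclideanSpace.norm_eq]
    have hb : (∑ i, ‖(x - x₀) i‖ ^ 2) ≤ (k + 1) * (h / 2) ^ 2 := by
      calc ∑ i, ‖(x - x₀) i‖ ^ 2 ≤ ∑ _i : Fin (k + 1), (h / 2) ^ 2 := by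
            refine Finset.sum_le_sum fun i _ => ?_
            have hxe : (x - x₀ : EuclideanSpace ℝ (Fin (k + 1))) i = x i - x₀ i := rfl
            rw [hxe, Real.norm_eq_abs]
            have h1 := le_of_lt (hx i)
            nlinarith [abs_nonneg (x i - x₀ i)]
        _ = (k + 1) * (h / 2) ^ 2 := by
            rw [Finset.sum_const, Finset.card_univ, Fintype.card_fin, nsmul_eq_mul]
            push_cast
            ring
    calc Real.sqrt (∑ i, ‖(x - x₀) i‖ ^ 2) ≤ Real.sqrt ((k + 1) * (h / 2) ^ 2) :=
          Real.sqrt_le_sqrt hb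
      _ = Real.sqrt (k + 1) * (h / 2) := by
          rw [Real.sqrt_mul (by positivity), Real.sqrt_sq (by positivity)]
  have hAcont : Continuous fun x : EuclideanSpace ℝ (Fin (k + 1)) => ‖A x‖ :=
    (AffineMap.continuous_of_finiteDimensional A).norm
  have hT : BddAbove ((fun x => ‖A x‖) '' Q) := by
    have hcpt : IsCompact (Metric.closedBall x₀ r) := isCompact_closedBall _ _
    exact (hcpt.bddAbove_image hAcont.continuousOn).mono (Set.image_mono hQball)
  have hQx₀ : x₀ ∈ Q := by
    intro i
    simpa using (by positivity : (0 : ℝ) < h / 2)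
  have hTne : ((fun x => ‖A x‖) '' Q).Nonempty := ⟨_, ⟨x₀, hQx₀, rfl⟩⟩
  set M : ℝ := sSup ((fun x => ‖A x‖) '' Q) with hM_def
  have hMle : ∀ x ∈ Q, ‖A x‖ ≤ M := fun x hx => le_csSup hT ⟨x, hx, rfl⟩
  have hM0 : 0 ≤ M := le_trans (norm_nonneg _) (hMle x₀ hQx₀)
  have hSfin : volume S ≠ ⊤ := by
    have h1 : volume S ≤ volume Q := measure_mono hSsub
    rw [hQ_def, vol_cube x₀ hh.le] at h1
    exact (lt_of_le_of_lt h1 ENNReal.ofReal_lt_top).ne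
  have hS0 : 0 < (volume S).toReal := lt_of_lt_of_le (by positivity) hSvol
  have hint : IntegrableOn (fun x => ‖A x‖ ^ p) S volume := by
    refine Measure.integrableOn_of_bounded (M := M ^ p) hSfin
      ((hAcont.rpow_const fun x => Or.inr hp0.le).aestronglyMeasurable) ?_
    refine Filter.Eventually.mono (ae_restrict_mem hSmeas) fun x hx => ?_
    rw [Real.norm_eq_abs, abs_of_nonneg (Real.rpow_nonneg (norm_nonneg _) _)]
    exact Real.rpow_le_rpow (norm_nonneg _) (hMle x (hSsub hx)) hp0.le
  have hInn : 0 ≤ ∫ x in S, ‖A x‖ ^ p :=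
    integral_nonneg fun x => Real.rpow_nonneg (norm_nonneg _) _
  set R : ℝ := (2 / t ^ p) * (∫ x in S, ‖A x‖ ^ p) / (volume S).toReal with hR_def
  have hR0 : 0 ≤ R := by positivity
  have key : ∀ y ∈ (fun x => ‖A x‖) '' Q, y ≤ R ^ p⁻¹ := by
    rintro y ⟨x₁, hx₁, rfl⟩
    have hc := key_claim hp hlam0 ht0 ht4 htlam A x₀ hh S hSmeas hSsub hSvol hint hx₁
    have h2 : ‖A x₁‖ ^ p ≤ R := by
      rw [hR_def, le_div_iff₀ hS0]
      linarith
    calc ‖A x₁‖ = (‖A x₁‖ ^ p) ^ p⁻¹ := (Real.rpow_rpow_inv (norm_nonneg _) hpne).symm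
      _ ≤ R ^ p⁻¹ := Real.rpow_le_rpow (Real.rpow_nonneg (norm_nonneg _) _) h2
          (by positivity)
  have hMle2 : M ≤ R ^ p⁻¹ := csSup_le hTne key
  have hfinal : M ^ p ≤ R := by
    calc M ^ p ≤ (R ^ p⁻¹) ^ p := Real.rpow_le_rpow hM0 hMle2 hp0.le
      _ = R := Real.rpow_inv_rpow hR0 hpne
  calc (volume S).toReal * M ^ p ≤ (volume S).toReal * R :=
        mul_le_mul_of_nonneg_left hfinal hS0.le
    _ = 2 / t ^ p * ∫ x in S, ‖A x‖ ^ p := by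
        rw [hR_def, mul_div_assoc']
        rw [mul_comm ((volume S).toReal)]
        rw [mul_div_assoc]
        rw [div_self (ne_of_gt hS0), mul_one]
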